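/- (Theorem on partial keypoint-guided OT.) Suppose G_{i,j} ≥ 0 for all i,j, A > 0, Σ_{i∈I} p_i < s, Σ_{j∈J} q_j < s, and Π(p̄,q̄;M̄) ≠ ∅. Let π̄* be a minimizer of ⟨M̄⊙π̄, Ḡ⟩_F over π̄ ∈ Π(p̄,q̄;M̄), and let π̈ be the upper-left m×n block of π̄*. Then π̈ ∈ Π^s(p,q;M) and M⊙π̈ is an optimal transport plan of the partial problem, i.e., Σ_{i,j} M_{i,j} π̈_{i,j} G_{i,j} = min over π ∈ Π^s(p,q;M) of Σ_{i,j} M_{i,j} π_{i,j} G_{i,j}. -/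
import Mathlib


open Finset

noncomputable section

variable {m n : ℕ}

/-- Mask matrix determined by the keypoint pair set `K`:
`M i j = 1` if `(i,j) ∈ K`; `M i j = 0` if `i ∈ I` or `j ∈ J` but `(i,j) ∉ K`;
`M i j = 1` otherwise. -/
def mask (K : Finset (Fin m × Fin n)) : Matrix (Fin m) (Fin n) ℝ :=
  fun i j =>
    if (i, j) ∈ K then 1
    else if (∃ j', (i, j') ∈ K) ∨ (∃ i', (i', j) ∈ K) then 0
    else 1

/-- The masked feasible set `Π(p, q; M)`. -/
def PiM (M : Matrix (Fin m) (Fin n) ℝ) (p : Fin m → ℝ) (q : Fin n → ℝ) :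
    Set (Matrix (Fin m) (Fin n) ℝ) :=
  {π | (∀ i j, 0 ≤ π i j) ∧ (∀ i, ∑ j, M i j * π i j = p i) ∧
    (∀ j, ∑ i, M i j * π i j = q j)}

/-- Extend an `m × n` matrix by one extra column, one extra row and a corner entry. -/
def extend (B : Matrix (Fin m) (Fin n) ℝ) (col : Fin m → ℝ) (row : Fin n → ℝ)
    (corner : ℝ) : Matrix (Fin (m + 1)) (Fin (n + 1)) ℝ :=
  fun i j =>
    if hi : (i : ℕ) < m then
      if hj : (j : ℕ) < n then B ⟨i, hi⟩ ⟨j, hj⟩ else col ⟨i, hi⟩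
    else if hj : (j : ℕ) < n then row ⟨j, hj⟩ else corner

/-- Extend a vector by one extra entry. -/
def extVec (v : Fin m → ℝ) (last : ℝ) : Fin (m + 1) → ℝ :=
  fun i => if hi : (i : ℕ) < m then v ⟨i, hi⟩ else last

/-- `a i = 0` if `i ∈ I` and `1` otherwise. -/
def avec (K : Finset (Fin m × Fin n)) : Fin m → ℝ :=
  fun i => if ∃ j, (i, j) ∈ K then 0 else 1

/-- `b j = 0` if `j ∈ J` and `1` otherwise. -/
def bvec (K : Finset (Fin m × Fin n)) : Fin n → ℝ :=
  fun j => if ∃ i, (i, j) ∈ K then 0 else 1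

/-- The extended mask `M̄`. -/
def Mbar (K : Finset (Fin m × Fin n)) : Matrix (Fin (m + 1)) (Fin (n + 1)) ℝ :=
  extend (mask K) (avec K) (bvec K) 1

/-- The extended guiding matrix `Ḡ`. -/
def Gbar (G : Matrix (Fin m) (Fin n) ℝ) (ξ A : ℝ) :
    Matrix (Fin (m + 1)) (Fin (n + 1)) ℝ :=
  extend G (fun _ => ξ) (fun _ => ξ) (2 * ξ + A)

/-- The extended source weights `p̄ = (pᵀ, ‖q‖₁ − s)ᵀ`. -/
def pbar (p : Fin m → ℝ) (q : Fin n → ℝ) (s : ℝ) : Fin (m + 1) → ℝ :=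
  extVec p (∑ j, q j - s)

/-- The extended target weights `q̄ = (qᵀ, ‖p‖₁ − s)ᵀ`. -/
def qbar (p : Fin m → ℝ) (q : Fin n → ℝ) (s : ℝ) : Fin (n + 1) → ℝ :=
  extVec q (∑ i, p i - s)

/-- The partial masked feasible set `Π^s(p, q; M)`. -/
def PiPartial (K : Finset (Fin m × Fin n)) (p : Fin m → ℝ) (q : Fin n → ℝ) (s : ℝ) :
    Set (Matrix (Fin m) (Fin n) ℝ) :=
  {π | (∀ i j, 0 ≤ π i j) ∧ (∀ i, ∑ j, mask K i j * π i j ≤ p i) ∧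
    (∀ j, ∑ i, mask K i j * π i j ≤ q j) ∧
    (∑ i, ∑ j, mask K i j * π i j = s) ∧
    (∀ i, (∃ j, (i, j) ∈ K) → ∑ j, mask K i j * π i j = p i) ∧
    (∀ j, (∃ i, (i, j) ∈ K) → ∑ i, mask K i j * π i j = q j)}


lemma extend_cc (B : Matrix (Fin m) (Fin n) ℝ) (col : Fin m → ℝ) (row : Fin n → ℝ)
    (corner : ℝ) (i : Fin m) (j : Fin n) :
    extend B col row corner i.castSucc j.castSucc = B i j := by
  simp [extend]

lemma extend_cl (B : Matrix (Fin m) (Fin n) ℝ) (col : Fin m → ℝ) (row : Fin n → ℝ)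
    (corner : ℝ) (i : Fin m) :
    extend B col row corner i.castSucc (Fin.last n) = col i := by
  simp [extend]

lemma extend_lc (B : Matrix (Fin m) (Fin n) ℝ) (col : Fin m → ℝ) (row : Fin n → ℝ)
    (corner : ℝ) (j : Fin n) :
    extend B col row corner (Fin.last m) j.castSucc = row j := by
  simp [extend]

lemma extend_ll (B : Matrix (Fin m) (Fin n) ℝ) (col : Fin m → ℝ) (row : Fin n → ℝ)
    (corner : ℝ) :
    extend B col row corner (Fin.last m) (Fin.last n) = corner := by
  simp [extend]

lemma extVec_c (v : Fin m → ℝ) (l : ℝ) (i : Fin m) : extVec v l i.castSucc = v i := by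
  simp [extVec]

lemma extVec_l (v : Fin m → ℝ) (l : ℝ) : extVec v l (Fin.last m) = l := by
  simp [extVec]

lemma mask_cases (K : Finset (Fin m × Fin n)) (i : Fin m) (j : Fin n) :
    mask K i j = 0 ∨ mask K i j = 1 := by
  unfold mask; split_ifs <;> simp

lemma mask_nonneg (K : Finset (Fin m × Fin n)) (i : Fin m) (j : Fin n) :
    0 ≤ mask K i j := by
  rcases mask_cases K i j with h | h <;> rw [h] <;> norm_num

lemma avec_nonneg (K : Finset (Fin m × Fin n)) (i : Fin m) : 0 ≤ avec K i := by
  unfold avec; split_ifs <;> norm_num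

lemma bvec_nonneg (K : Finset (Fin m × Fin n)) (j : Fin n) : 0 ≤ bvec K j := by
  unfold bvec; split_ifs <;> norm_num

lemma sum_ind_sub {N : ℕ} (a b : Fin N) (f : Fin N → ℝ) :
    ∑ x, ((if x = a then (1:ℝ) else 0) - if x = b then 1 else 0) * f x = f a - f b := by
  simp [sub_mul, Finset.sum_sub_distrib, ite_mul, Finset.sum_ite_eq']

lemma double_sum_ext (f : Fin (m+1) → Fin (n+1) → ℝ) :
    ∑ i, ∑ j, f i j = (∑ i : Fin m, ∑ j : Fin n, f i.castSucc j.castSucc)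
      + (∑ i : Fin m, f i.castSucc (Fin.last n)) + (∑ j : Fin n, f (Fin.last m) j.castSucc)
      + f (Fin.last m) (Fin.last n) := by
  rw [Fin.sum_univ_castSucc]
  simp_rw [Fin.sum_univ_castSucc]
  rw [Finset.sum_add_distrib]
  ring

set_option maxHeartbeats 3200000 in
/-- Theorem on partial keypoint-guided OT: under `G ≥ 0`, `A > 0`,
`∑_{i ∈ I} p i < s`, `∑_{j ∈ J} q j < s` and nonemptiness of `Π(p̄,q̄;M̄)`, the
upper-left `m × n` block `π̈` of any minimizer `π̄*` of `⟨M̄ ⊙ π̄, Ḡ⟩_F` over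
`Π(p̄,q̄;M̄)` lies in `Π^s(p,q;M)` and `M ⊙ π̈` is an optimal plan of the
partial problem. -/
theorem partial_kpg_via_extended_problem
    (p : Fin m → ℝ) (q : Fin n → ℝ) (K : Finset (Fin m × Fin n)) (s : ℝ)
    (G : Matrix (Fin m) (Fin n) ℝ) (ξ A : ℝ)
    (hp : ∀ i, 0 ≤ p i) (hq : ∀ j, 0 ≤ q j)
    (hK1 : ∀ a ∈ K, ∀ b ∈ K, a.1 = b.1 → a = b)
    (hK2 : ∀ a ∈ K, ∀ b ∈ K, a.2 = b.2 → a = b)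
    (hs0 : 0 ≤ s) (hs : s ≤ min (∑ i, p i) (∑ j, q j))
    (hG : ∀ i j, 0 ≤ G i j) (hA : 0 < A)
    (hIp : ∑ i ∈ univ.filter (fun i => ∃ j, (i, j) ∈ K), p i < s)
    (hJq : ∑ j ∈ univ.filter (fun j => ∃ i, (i, j) ∈ K), q j < s)
    (hne : (PiM (Mbar K) (pbar p q s) (qbar p q s)).Nonempty)
    (πb : Matrix (Fin (m + 1)) (Fin (n + 1)) ℝ)
    (hπb : πb ∈ PiM (Mbar K) (pbar p q s) (qbar p q s))
    (hmin : ∀ π' ∈ PiM (Mbar K) (pbar p q s) (qbar p q s),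
      ∑ i, ∑ j, Mbar K i j * πb i j * Gbar G ξ A i j
        ≤ ∑ i, ∑ j, Mbar K i j * π' i j * Gbar G ξ A i j) :
    (fun (i : Fin m) (j : Fin n) => πb i.castSucc j.castSucc) ∈ PiPartial K p q s
    ∧ ∀ π ∈ PiPartial K p q s,
        ∑ i : Fin m, ∑ j : Fin n, mask K i j * πb i.castSucc j.castSucc * G i j
          ≤ ∑ i : Fin m, ∑ j : Fin n, mask K i j * π i j * G i j := by
  classical
  obtain ⟨hnn, hrowb, hcolb⟩ := hπb
  set t := πb (Fin.last m) (Fin.last n) with htdef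
  have htnn : 0 ≤ t := hnn _ _
  have hrow' : ∀ i : Fin m,
      (∑ j : Fin n, mask K i j * πb i.castSucc j.castSucc)
        + avec K i * πb i.castSucc (Fin.last n) = p i := by
    intro i
    have h := hrowb i.castSucc
    rw [Fin.sum_univ_castSucc] at h
    simpa [Mbar, pbar, extend_cc, extend_cl, extVec_c] using h
  have hcol' : ∀ j : Fin n,
      (∑ i : Fin m, mask K i j * πb i.castSucc j.castSucc)
        + bvec K j * πb (Fin.last m) j.castSucc = q j := by
    intro j
    have h := hcolb j.castSucc
    rw [Fin.sum_univ_castSucc] at h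
    simpa [Mbar, qbar, extend_cc, extend_lc, extVec_c] using h
  have hrowlast :
      (∑ j : Fin n, bvec K j * πb (Fin.last m) j.castSucc) + t = ∑ j, q j - s := by
    have h := hrowb (Fin.last m)
    rw [Fin.sum_univ_castSucc] at h
    simpa [Mbar, pbar, extend_lc, extend_ll, extVec_l] using h
  have hcollast :
      (∑ i : Fin m, avec K i * πb i.castSucc (Fin.last n)) + t = ∑ i, p i - s := by
    have h := hcolb (Fin.last n)
    rw [Fin.sum_univ_castSucc] at h
    simpa [Mbar, qbar, extend_cl, extend_ll, extVec_l] using h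
  have hrle : ∀ i : Fin m, ∑ j, mask K i j * πb i.castSucc j.castSucc ≤ p i := by
    intro i
    have h := hrow' i
    nlinarith [mul_nonneg (avec_nonneg K i) (hnn i.castSucc (Fin.last n))]
  have hcle : ∀ j : Fin n, ∑ i, mask K i j * πb i.castSucc j.castSucc ≤ q j := by
    intro j
    have h := hcol' j
    nlinarith [mul_nonneg (bvec_nonneg K j) (hnn (Fin.last m) j.castSucc)]
  have hrI : ∀ i : Fin m, (∃ j, (i, j) ∈ K) →
      ∑ j, mask K i j * πb i.castSucc j.castSucc = p i := by
    intro i hi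
    have ha : avec K i = 0 := by simp [avec, hi]
    have h := hrow' i
    rw [ha] at h
    linarith
  have hcJ : ∀ j : Fin n, (∃ i, (i, j) ∈ K) →
      ∑ i, mask K i j * πb i.castSucc j.castSucc = q j := by
    intro j hj
    have hb : bvec K j = 0 := by simp [bvec, hj]
    have h := hcol' j
    rw [hb] at h
    linarith
  have hmass : ∑ i : Fin m, ∑ j : Fin n, mask K i j * πb i.castSucc j.castSucc = s + t := by
    have h1 : ∑ i : Fin m, ((∑ j : Fin n, mask K i j * πb i.castSucc j.castSucc)
        + avec K i * πb i.castSucc (Fin.last n)) = ∑ i, p i :=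
      Finset.sum_congr rfl fun i _ => hrow' i
    rw [Finset.sum_add_distrib] at h1
    linarith [hcollast]
  -- the corner entry vanishes at the minimizer
  have ht0 : t = 0 := by
    by_contra hne0
    have htpos : 0 < t := lt_of_le_of_ne htnn (Ne.symm hne0)
    -- find a row i0 outside I carrying positive mass
    have hsplit := Finset.sum_filter_add_sum_filter_not Finset.univ
      (fun i : Fin m => ∃ j, (i, j) ∈ K)
      (fun i : Fin m => ∑ j : Fin n, mask K i j * πb i.castSucc j.castSucc)
    have hIr : ∑ i ∈ Finset.univ.filter (fun i : Fin m => ∃ j, (i, j) ∈ K),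
        ∑ j : Fin n, mask K i j * πb i.castSucc j.castSucc
        = ∑ i ∈ Finset.univ.filter (fun i : Fin m => ∃ j, (i, j) ∈ K), p i := by
      refine Finset.sum_congr rfl fun i hi => ?_
      exact hrI i (by simpa using hi)
    have hpos : (0:ℝ) < ∑ i ∈ Finset.univ.filter (fun i : Fin m => ¬ ∃ j, (i, j) ∈ K),
        ∑ j : Fin n, mask K i j * πb i.castSucc j.castSucc := by
      rw [hmass] at hsplit
      rw [hIr] at hsplit
      linarith
    have hpos' : (∑ i ∈ Finset.univ.filter (fun i : Fin m => ¬ ∃ j, (i, j) ∈ K), (0:ℝ))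
        < ∑ i ∈ Finset.univ.filter (fun i : Fin m => ¬ ∃ j, (i, j) ∈ K),
            ∑ j : Fin n, mask K i j * πb i.castSucc j.castSucc := by
      simpa using hpos
    obtain ⟨i0, hi0mem, hi0pos⟩ := Finset.exists_lt_of_sum_lt hpos'
    have hi0I : ¬ ∃ j, (i0, j) ∈ K := by simpa using hi0mem
    have hi0pos' : (∑ j : Fin n, (0:ℝ))
        < ∑ j : Fin n, mask K i0 j * πb i0.castSucc j.castSucc := by
      simpa using hi0pos
    obtain ⟨j0, _, hj0pos⟩ := Finset.exists_lt_of_sum_lt hi0pos'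
    have hm1 : mask K i0 j0 = 1 := by
      rcases mask_cases K i0 j0 with h | h
      · rw [h] at hj0pos; simp at hj0pos
      · exact h
    have hπpos : 0 < πb i0.castSucc j0.castSucc := by
      rw [hm1, one_mul] at hj0pos; exact hj0pos
    have hj0J : ¬ ∃ i, (i, j0) ∈ K := by
      intro hj
      have : mask K i0 j0 = 0 := by
        have hnotK : (i0, j0) ∉ K := fun hk => hi0I ⟨j0, hk⟩
        simp [mask, hnotK, Or.inr hj]
      rw [this] at hm1; norm_num at hm1
    -- Mbar values at the four corners of the rectangle
    have hne1 : i0.castSucc ≠ Fin.last m := (Fin.castSucc_lt_last i0).ne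
    have hne2 : j0.castSucc ≠ Fin.last n := (Fin.castSucc_lt_last j0).ne
    have Mcc : Mbar K i0.castSucc j0.castSucc = 1 := by
      rw [Mbar, extend_cc, hm1]
    have Mcl : Mbar K i0.castSucc (Fin.last n) = 1 := by
      rw [Mbar, extend_cl]; simp [avec, hi0I]
    have Mlc : Mbar K (Fin.last m) j0.castSucc = 1 := by
      rw [Mbar, extend_lc]; simp [bvec, hj0J]
    have Mll : Mbar K (Fin.last m) (Fin.last n) = 1 := by
      rw [Mbar, extend_ll]
    set δ := min (πb i0.castSucc j0.castSucc) t with hδdef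
    have hδpos : 0 < δ := lt_min hπpos htpos
    have hδ1 : δ ≤ πb i0.castSucc j0.castSucc := min_le_left _ _
    have hδ2 : δ ≤ t := min_le_right _ _
    set u : Fin (m+1) → ℝ :=
      fun i => (if i = i0.castSucc then (1:ℝ) else 0) - (if i = Fin.last m then 1 else 0)
      with hu
    set v : Fin (n+1) → ℝ :=
      fun j => (if j = j0.castSucc then (1:ℝ) else 0) - (if j = Fin.last n then 1 else 0)
      with hv
    set π' : Matrix (Fin (m+1)) (Fin (n+1)) ℝ :=
      fun i j => πb i j - δ * (u i * v j) with hπ'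
    have hvsum : ∀ i : Fin (m+1),
        ∑ j, Mbar K i j * v j = Mbar K i j0.castSucc - Mbar K i (Fin.last n) := by
      intro i
      simp [hv, mul_sub, Finset.sum_sub_distrib, mul_ite, mul_one, mul_zero,
        Finset.sum_ite_eq']
    have husum : ∀ j : Fin (n+1),
        ∑ i, Mbar K i j * u i = Mbar K i0.castSucc j - Mbar K (Fin.last m) j := by
      intro j
      simp [hu, mul_sub, Finset.sum_sub_distrib, mul_ite, mul_one, mul_zero,
        Finset.sum_ite_eq']
    have hukill : ∀ i : Fin (m+1),
        u i * (Mbar K i j0.castSucc - Mbar K i (Fin.last n)) = 0 := by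
      intro i
      by_cases hi1 : i = i0.castSucc
      · subst hi1; rw [Mcc, Mcl]; ring
      · by_cases hi2 : i = Fin.last m
        · subst hi2; rw [Mlc, Mll]; ring
        · simp [hu, hi1, hi2]
    have hvkill : ∀ j : Fin (n+1),
        v j * (Mbar K i0.castSucc j - Mbar K (Fin.last m) j) = 0 := by
      intro j
      by_cases hj1 : j = j0.castSucc
      · subst hj1; rw [Mcc, Mlc]; ring
      · by_cases hj2 : j = Fin.last n
        · subst hj2; rw [Mcl, Mll]; ring
        · simp [hv, hj1, hj2]
    have hfeas : π' ∈ PiM (Mbar K) (pbar p q s) (qbar p q s) := by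
      refine ⟨?_, ?_, ?_⟩
      · intro i j
        by_cases hi1 : i = i0.castSucc
        · subst hi1
          by_cases hj1 : j = j0.castSucc
          · subst hj1
            have hval : π' i0.castSucc j0.castSucc
                = πb i0.castSucc j0.castSucc - δ := by
              simp [hπ', hu, hv, hne1, hne2]
            rw [hval]; linarith
          · by_cases hj2 : j = Fin.last n
            · subst hj2
              have hval : π' i0.castSucc (Fin.last n)
                  = πb i0.castSucc (Fin.last n) + δ := by
                simp [hπ', hu, hv, hne1, Ne.symm hne2]
              rw [hval]
              have := hnn i0.castSucc (Fin.last n); linarith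
            · have hval : π' i0.castSucc j = πb i0.castSucc j := by
                simp [hπ', hu, hv, hj1, hj2]
              rw [hval]; exact hnn _ _
        · by_cases hi2 : i = Fin.last m
          · subst hi2
            by_cases hj1 : j = j0.castSucc
            · subst hj1
              have hval : π' (Fin.last m) j0.castSucc
                  = πb (Fin.last m) j0.castSucc + δ := by
                simp [hπ', hu, hv, Ne.symm hne1, hne2]
              rw [hval]
              have := hnn (Fin.last m) j0.castSucc; linarith
            · by_cases hj2 : j = Fin.last n
              · subst hj2
                have hval : π' (Fin.last m) (Fin.last n)
                    = πb (Fin.last m) (Fin.last n) - δ := by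
                  simp [hπ', hu, hv, Ne.symm hne1, Ne.symm hne2]
                rw [hval]
                have h2 : δ ≤ πb (Fin.last m) (Fin.last n) := by
                  rw [← htdef]; exact hδ2
                linarith
              · have hval : π' (Fin.last m) j = πb (Fin.last m) j := by
                  simp [hπ', hu, hv, hj1, hj2]
                rw [hval]; exact hnn _ _
          · have hval : π' i j = πb i j := by
              simp [hπ', hu, hi1, hi2]
            rw [hval]; exact hnn _ _
      · intro i
        have hexp : ∑ j, Mbar K i j * π' i j
            = (∑ j, Mbar K i j * πb i j)
              - δ * u i * (∑ j, Mbar K i j * v j) := by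
          rw [Finset.mul_sum, ← Finset.sum_sub_distrib]
          refine Finset.sum_congr rfl fun j _ => ?_
          simp only [hπ']
          ring
        rw [hexp, hvsum i, mul_assoc, hukill i, mul_zero, sub_zero]
        exact hrowb i
      · intro j
        have hexp : ∑ i, Mbar K i j * π' i j
            = (∑ i, Mbar K i j * πb i j)
              - δ * v j * (∑ i, Mbar K i j * u i) := by
          rw [Finset.mul_sum, ← Finset.sum_sub_distrib]
          refine Finset.sum_congr rfl fun i _ => ?_
          simp only [hπ']
          ring
        rw [hexp, husum j, mul_assoc, hvkill j, mul_zero, sub_zero]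
        exact hcolb j
    have hcost : ∑ i, ∑ j, Mbar K i j * π' i j * Gbar G ξ A i j
        = (∑ i, ∑ j, Mbar K i j * πb i j * Gbar G ξ A i j)
          - δ * (G i0 j0 + A) := by
      have hexp : ∀ i : Fin (m+1), ∑ j, Mbar K i j * π' i j * Gbar G ξ A i j
          = (∑ j, Mbar K i j * πb i j * Gbar G ξ A i j)
            - δ * u i * (∑ j, v j * (Mbar K i j * Gbar G ξ A i j)) := by
        intro i
        rw [Finset.mul_sum, ← Finset.sum_sub_distrib]
        refine Finset.sum_congr rfl fun j _ => ?_
        simp only [hπ']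
        ring
      calc ∑ i, ∑ j, Mbar K i j * π' i j * Gbar G ξ A i j
          = ∑ i, ((∑ j, Mbar K i j * πb i j * Gbar G ξ A i j)
            - δ * u i * (∑ j, v j * (Mbar K i j * Gbar G ξ A i j))) :=
            Finset.sum_congr rfl fun i _ => hexp i
        _ = (∑ i, ∑ j, Mbar K i j * πb i j * Gbar G ξ A i j)
            - δ * (∑ i, u i * (∑ j, v j * (Mbar K i j * Gbar G ξ A i j))) := by
            rw [Finset.sum_sub_distrib]
            congr 1
            rw [Finset.mul_sum]
            exact Finset.sum_congr rfl fun i _ => by ring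
        _ = (∑ i, ∑ j, Mbar K i j * πb i j * Gbar G ξ A i j)
            - δ * (G i0 j0 + A) := by
            congr 1
            congr 1
            have hinner : ∀ i : Fin (m+1),
                ∑ j, v j * (Mbar K i j * Gbar G ξ A i j)
                = Mbar K i j0.castSucc * Gbar G ξ A i j0.castSucc
                  - Mbar K i (Fin.last n) * Gbar G ξ A i (Fin.last n) := by
              intro i
              rw [hv]
              exact sum_ind_sub j0.castSucc (Fin.last n)
                (fun j => Mbar K i j * Gbar G ξ A i j)
            have houter : ∑ i, u i * (∑ j, v j * (Mbar K i j * Gbar G ξ A i j))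
                = (∑ j, v j * (Mbar K i0.castSucc j * Gbar G ξ A i0.castSucc j))
                  - (∑ j, v j * (Mbar K (Fin.last m) j * Gbar G ξ A (Fin.last m) j)) := by
              rw [hu]
              exact sum_ind_sub i0.castSucc (Fin.last m)
                (fun i => ∑ j, v j * (Mbar K i j * Gbar G ξ A i j))
            rw [houter, hinner, hinner, Mcc, Mcl, Mlc, Mll]
            simp only [Gbar, extend_cc, extend_cl, extend_lc, extend_ll]
            ring
    have hcontra := hmin π' hfeas
    rw [hcost] at hcontra
    have hGA : 0 < G i0 j0 + A := by nlinarith [hG i0 j0]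
    nlinarith [mul_pos hδpos hGA]
  -- membership in the partial feasible set
  have hmem : (fun (i : Fin m) (j : Fin n) => πb i.castSucc j.castSucc)
      ∈ PiPartial K p q s := by
    refine ⟨fun i j => hnn _ _, hrle, hcle, ?_, hrI, hcJ⟩
    rw [hmass, ht0, add_zero]
  refine ⟨hmem, ?_⟩
  -- optimality
  intro π hπ
  obtain ⟨πnn, πrle, πcle, πmass, πrI, πcJ⟩ := hπ
  have πcmass : ∑ j : Fin n, ∑ i : Fin m, mask K i j * π i j = s := by
    rw [Finset.sum_comm]; exact πmass
  set πe := extend π (fun i => p i - ∑ j, mask K i j * π i j)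
    (fun j => q j - ∑ i, mask K i j * π i j) 0 with hπe
  have hfease : πe ∈ PiM (Mbar K) (pbar p q s) (qbar p q s) := by
    refine ⟨?_, ?_, ?_⟩
    · intro i j
      simp only [hπe, extend]
      split_ifs
      · exact πnn _ _
      · exact sub_nonneg.2 (πrle _)
      · exact sub_nonneg.2 (πcle _)
      · exact le_refl 0
    · intro i
      refine Fin.lastCases ?_ (fun i => ?_) i
      · rw [Fin.sum_univ_castSucc]
        simp only [Mbar, hπe, extend_lc, extend_ll, pbar, extVec_l, one_mul, mul_zero,
          add_zero]
        have heach : ∀ j : Fin n, bvec K j * (q j - ∑ i, mask K i j * π i j)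
            = q j - ∑ i, mask K i j * π i j := by
          intro j
          by_cases hj : ∃ i, (i, j) ∈ K
          · simp [bvec, hj, πcJ j hj]
          · simp [bvec, hj]
        rw [Finset.sum_congr rfl fun j _ => heach j, Finset.sum_sub_distrib, πcmass]
      · rw [Fin.sum_univ_castSucc]
        simp only [Mbar, hπe, extend_cc, extend_cl, pbar, extVec_c]
        by_cases hi : ∃ j, (i, j) ∈ K
        · simp [avec, hi, πrI i hi]
        · simp [avec, hi]
    · intro j
      refine Fin.lastCases ?_ (fun j => ?_) j
      · rw [Fin.sum_univ_castSucc]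
        simp only [Mbar, hπe, extend_cl, extend_ll, qbar, extVec_l, one_mul, mul_zero,
          add_zero]
        have heach : ∀ i : Fin m, avec K i * (p i - ∑ j, mask K i j * π i j)
            = p i - ∑ j, mask K i j * π i j := by
          intro i
          by_cases hi : ∃ j, (i, j) ∈ K
          · simp [avec, hi, πrI i hi]
          · simp [avec, hi]
        rw [Finset.sum_congr rfl fun i _ => heach i, Finset.sum_sub_distrib, πmass]
      · rw [Fin.sum_univ_castSucc]
        simp only [Mbar, hπe, extend_cc, extend_lc, qbar, extVec_c]
        by_cases hj : ∃ i, (i, j) ∈ K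
        · simp [bvec, hj, πcJ j hj]
        · simp [bvec, hj]
  -- expand the two extended costs
  have expb := double_sum_ext (fun i j => Mbar K i j * πb i j * Gbar G ξ A i j)
  simp only [Mbar, Gbar, extend_cc, extend_cl, extend_lc, extend_ll] at expb
  have expe := double_sum_ext (fun i j => Mbar K i j * πe i j * Gbar G ξ A i j)
  simp only [Mbar, Gbar, hπe, extend_cc, extend_cl, extend_lc, extend_ll] at expe
  have hb2s : ∑ i : Fin m, avec K i * πb i.castSucc (Fin.last n) = ∑ i, p i - s := by
    linarith [hcollast, ht0]
  have hb2 : ∑ i : Fin m, avec K i * πb i.castSucc (Fin.last n) * ξ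
      = (∑ i, p i - s) * ξ := by
    rw [← Finset.sum_mul, hb2s]
  have hb3s : ∑ j : Fin n, bvec K j * πb (Fin.last m) j.castSucc = ∑ j, q j - s := by
    linarith [hrowlast, ht0]
  have hb3 : ∑ j : Fin n, bvec K j * πb (Fin.last m) j.castSucc * ξ
      = (∑ j, q j - s) * ξ := by
    rw [← Finset.sum_mul, hb3s]
  have he2 : ∑ i : Fin m, avec K i * (p i - ∑ j, mask K i j * π i j) * ξ
      = (∑ i, p i - s) * ξ := by
    have heach : ∀ i : Fin m, avec K i * (p i - ∑ j, mask K i j * π i j)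
        = p i - ∑ j, mask K i j * π i j := by
      intro i
      by_cases hi : ∃ j, (i, j) ∈ K
      · simp [avec, hi, πrI i hi]
      · simp [avec, hi]
    have hsum : ∑ i : Fin m, avec K i * (p i - ∑ j, mask K i j * π i j)
        = ∑ i, p i - s := by
      rw [Finset.sum_congr rfl fun i _ => heach i, Finset.sum_sub_distrib, πmass]
    rw [← Finset.sum_mul, hsum]
  have he3 : ∑ j : Fin n, bvec K j * (q j - ∑ i, mask K i j * π i j) * ξ
      = (∑ j, q j - s) * ξ := by
    have heach : ∀ j : Fin n, bvec K j * (q j - ∑ i, mask K i j * π i j)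
        = q j - ∑ i, mask K i j * π i j := by
      intro j
      by_cases hj : ∃ i, (i, j) ∈ K
      · simp [bvec, hj, πcJ j hj]
      · simp [bvec, hj]
    have hsum : ∑ j : Fin n, bvec K j * (q j - ∑ i, mask K i j * π i j)
        = ∑ j, q j - s := by
      rw [Finset.sum_congr rfl fun j _ => heach j, Finset.sum_sub_distrib, πcmass]
    rw [← Finset.sum_mul, hsum]
  have hc0 : πb (Fin.last m) (Fin.last n) = 0 := by rw [← htdef]; exact ht0
  have hmain := hmin πe hfease
  simp only [Mbar, Gbar, hπe] at hmain
  rw [expb, expe] at hmain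
  rw [hb2, hb3, he2, he3, hc0] at hmain
  linarith [hmain]
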